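/- In the group G_{2r} = ⟨a, b : ab = ba⁻¹, b^{2r} = 1⟩, for positive integers m, k with (2k-1) | r and 0 ≤ j < m, the subgroup ⟨a^m, a^j b^{2k-1}⟩ has index (2k-1)m in G_{2r}. -/

import Mathlib

/-- Relations for `G_{2r} = ⟨a, b : b⁻¹ a b = a⁻¹, b^{2r} = 1⟩`. -/
def GRels (r : ℕ) : Set (FreeGroup (Fin 2)) :=
  {(FreeGroup.of 1)⁻¹ * FreeGroup.of 0 * FreeGroup.of 1 * FreeGroup.of 0,
   (FreeGroup.of 1) ^ (2 * r)}

/-- The group `G_{2r}`. -/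
abbrev GGrp (r : ℕ) := PresentedGroup (GRels r)

/-- The generator `a` of `G_{2r}`. -/
def ga (r : ℕ) : GGrp r := PresentedGroup.of 0

/-- The generator `b` of `G_{2r}`. -/
def gb (r : ℕ) : GGrp r := PresentedGroup.of 1

namespace Stmt5
variable {r : ℕ}

lemma hrel1 (r : ℕ) : (gb r)⁻¹ * ga r * gb r * ga r = 1 := by
  have h : ((FreeGroup.of 1)⁻¹ * FreeGroup.of 0 * FreeGroup.of 1 * FreeGroup.of 0 :
      FreeGroup (Fin 2)) ∈ Subgroup.normalClosure (GRels r) :=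
    Subgroup.subset_normalClosure (Set.mem_insert _ _)
  have := (QuotientGroup.eq_one_iff (G := FreeGroup (Fin 2))
    (N := Subgroup.normalClosure (GRels r)) _).2 h
  simp only [QuotientGroup.mk_mul, QuotientGroup.mk_inv] at this
  exact this

lemma hrel2 (r : ℕ) : gb r ^ (2 * r) = 1 := by
  have h : ((FreeGroup.of 1) ^ (2 * r) : FreeGroup (Fin 2)) ∈
      Subgroup.normalClosure (GRels r) :=
    Subgroup.subset_normalClosure (Set.mem_insert_of_mem _ rfl)
  have := (QuotientGroup.eq_one_iff (G := FreeGroup (Fin 2))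
    (N := Subgroup.normalClosure (GRels r)) _).2 h
  simp only [QuotientGroup.mk_pow] at this
  exact this

lemma hbab (r : ℕ) : (gb r)⁻¹ * ga r * gb r = (ga r)⁻¹ :=
  eq_inv_of_mul_eq_one_left (hrel1 r)

lemma conj_a (r : ℕ) : gb r * ga r * (gb r)⁻¹ = (ga r)⁻¹ := by
  have h3 : gb r * (ga r)⁻¹ * (gb r)⁻¹ = ga r := by rw [← hbab r]; group
  calc gb r * ga r * (gb r)⁻¹ = (gb r * (ga r)⁻¹ * (gb r)⁻¹)⁻¹ := by group
    _ = (ga r)⁻¹ := by rw [h3]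

lemma conj_a_zpow (r : ℕ) (s : ℤ) : gb r * ga r ^ s * (gb r)⁻¹ = ga r ^ (-s) := by
  have : (MulAut.conj (gb r)) (ga r ^ s) = ((MulAut.conj (gb r)) (ga r)) ^ s := map_zpow _ _ _
  simp only [MulAut.conj_apply] at this
  rw [this, conj_a, zpow_neg, inv_zpow]

lemma comm_sq (r : ℕ) : Commute (ga r) (gb r ^ 2) := by
  have h : gb r ^ 2 * ga r * (gb r ^ 2)⁻¹ = ga r := by
    have h1 := conj_a_zpow r 1
    have h2 := conj_a_zpow r (-1)
    simp only [zpow_one, neg_neg, zpow_neg] at h1 h2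
    calc gb r ^ 2 * ga r * (gb r ^ 2)⁻¹
        = gb r * (gb r * ga r * (gb r)⁻¹) * (gb r)⁻¹ := by
          simp [sq, mul_inv_rev, mul_assoc]
      _ = ga r := by rw [h1]; simpa using h2
  exact (mul_inv_eq_iff_eq_mul.mp h).symm


lemma even_shift (r : ℕ) (s t : ℤ) (ht : Even t) :
    gb r ^ t * ga r ^ s = ga r ^ s * gb r ^ t := by
  obtain ⟨u, rfl⟩ := ht
  have h1 : gb r ^ (u + u) = (gb r ^ 2) ^ u := by
    rw [← two_mul, ← zpow_natCast (gb r) 2, ← zpow_mul]; norm_num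
  rw [h1]
  exact (((comm_sq r).zpow_zpow s u).symm).eq

lemma odd_shift (r : ℕ) (s t : ℤ) (ht : Odd t) :
    gb r ^ t * ga r ^ s = ga r ^ (-s) * gb r ^ t := by
  obtain ⟨u, rfl⟩ := ht
  have h1 : gb r ^ (2 * u + 1) = gb r ^ (u + u) * gb r := by
    rw [zpow_add, zpow_one, two_mul]
  calc gb r ^ (2*u+1) * ga r ^ s = gb r ^ (u+u) * (gb r * ga r ^ s) := by
        rw [h1, mul_assoc]
    _ = gb r ^ (u+u) * (ga r ^ (-s) * gb r) := by
        rw [mul_inv_eq_iff_eq_mul.mp (conj_a_zpow r s)]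
    _ = (gb r ^ (u+u) * ga r ^ (-s)) * gb r := by rw [mul_assoc]
    _ = ga r ^ (-s) * gb r ^ (u+u) * gb r := by
        rw [even_shift r (-s) _ ⟨u, rfl⟩]
    _ = ga r ^ (-s) * gb r ^ (2*u+1) := by rw [mul_assoc, ← zpow_add_one, two_mul]

lemma shift (r : ℕ) (s t : ℤ) : ∃ s' : ℤ, gb r ^ t * ga r ^ s = ga r ^ s' * gb r ^ t := by
  rcases Int.even_or_odd t with h | h
  · exact ⟨s, even_shift r s t h⟩
  · exact ⟨-s, odd_shift r s t h⟩

/-- every element has normal form a^s b^t -/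
lemma exists_form (r : ℕ) (x : GGrp r) : ∃ s t : ℤ, x = ga r ^ s * gb r ^ t := by
  let W : Subgroup (GGrp r) :=
  { carrier := {x | ∃ s t : ℤ, x = ga r ^ s * gb r ^ t}
    one_mem' := ⟨0, 0, by simp⟩
    mul_mem' := by
      rintro x y ⟨s, t, rfl⟩ ⟨s', t', rfl⟩
      obtain ⟨s'', h⟩ := shift r s' t
      exact ⟨s + s'', t + t', by
        rw [zpow_add, zpow_add]
        calc ga r ^ s * gb r ^ t * (ga r ^ s' * gb r ^ t')
            = ga r ^ s * (gb r ^ t * ga r ^ s') * gb r ^ t' := by group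
          _ = ga r ^ s * (ga r ^ s'' * gb r ^ t) * gb r ^ t' := by rw [h]
          _ = ga r ^ s * ga r ^ s'' * (gb r ^ t * gb r ^ t') := by group⟩
    inv_mem' := by
      rintro x ⟨s, t, rfl⟩
      obtain ⟨s'', h⟩ := shift r (-s) (-t)
      exact ⟨s'', -t, by
        rw [mul_inv_rev, ← zpow_neg, ← zpow_neg, h]⟩ }
  have hW : ∀ y, y ∈ W := by
    have hcl : Subgroup.closure (Set.range (PresentedGroup.of : Fin 2 → GGrp r)) = ⊤ :=
      PresentedGroup.closure_range_of _
    intro y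
    have : y ∈ (⊤ : Subgroup (GGrp r)) := trivial
    rw [← hcl] at this
    refine Subgroup.closure_induction ?_ ?_ ?_ ?_ this
    · rintro x ⟨i, rfl⟩
      fin_cases i
      · exact ⟨1, 0, by simp [ga]⟩
      · exact ⟨0, 1, by simp [gb]⟩
    · exact W.one_mem
    · exact fun a b _ _ ha hb => W.mul_mem ha hb
    · exact fun a _ ha => W.inv_mem ha
  exact hW x

open DihedralGroup in
/-- image of the generators in `DihedralGroup m × Multiplicative (ZMod c)` -/
def f (m c : ℕ) : Fin 2 → DihedralGroup m × Multiplicative (ZMod c)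
  | 0 => (DihedralGroup.r 1, 1)
  | 1 => (DihedralGroup.sr 0, Multiplicative.ofAdd 1)

lemma inv_sr0 {m : ℕ} : (DihedralGroup.sr 0 : DihedralGroup m)⁻¹ = DihedralGroup.sr 0 :=
  inv_eq_of_mul_eq_one_right (DihedralGroup.sr_mul_self 0)

lemma sr_pow_even {m : ℕ} {n : ℕ} (h : Even n) : (DihedralGroup.sr 0 : DihedralGroup m) ^ n = 1 := by
  obtain ⟨u, rfl⟩ := h
  rw [← two_mul, pow_mul]
  simp [sq, ← DihedralGroup.one_def]

lemma sr_pow_odd {m : ℕ} {n : ℕ} (h : Odd n) :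
    (DihedralGroup.sr 0 : DihedralGroup m) ^ n = DihedralGroup.sr 0 := by
  obtain ⟨u, rfl⟩ := h
  rw [pow_add, sr_pow_even (even_two_mul u), one_mul, pow_one]

lemma ofAdd_one_pow {c : ℕ} (n : ℕ) :
    (Multiplicative.ofAdd (1 : ZMod c)) ^ n = Multiplicative.ofAdd (n : ZMod c) := by
  rw [← ofAdd_nsmul]
  simp

lemma hrelsf (r m c : ℕ) (hcr : c ∣ r) :
    ∀ w ∈ GRels r, FreeGroup.lift (f m c) w = 1 := by
  intro w hw
  rcases hw with h | h
  · subst h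
    simp only [map_mul, map_inv, FreeGroup.lift_apply_of, f]
    ext
    · simp [inv_sr0, ← DihedralGroup.one_def]
    · simp
  · simp only [Set.mem_singleton_iff] at h
    subst h
    simp only [map_pow, FreeGroup.lift_apply_of, f]
    ext
    · simp [sr_pow_even (even_two_mul r), ← DihedralGroup.one_def]
    · simp only [Prod.pow_snd, ofAdd_one_pow]
      have : ((2 * r : ℕ) : ZMod c) = 0 :=
        (ZMod.natCast_eq_zero_iff _ _).2 (hcr.mul_left 2)
      simp [this]

/-- the homomorphism `G → D_m × Z/c` -/
def phi (r m c : ℕ) (hcr : c ∣ r) :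
    GGrp r →* DihedralGroup m × Multiplicative (ZMod c) :=
  PresentedGroup.toGroup (hrelsf r m c hcr)

lemma phi_a (r m c : ℕ) (hcr : c ∣ r) :
    phi r m c hcr (ga r) = (DihedralGroup.r 1, 1) :=
  PresentedGroup.toGroup.of _

lemma phi_b (r m c : ℕ) (hcr : c ∣ r) :
    phi r m c hcr (gb r) = (DihedralGroup.sr 0, Multiplicative.ofAdd 1) :=
  PresentedGroup.toGroup.of _

lemma phi_a_pow (r m c : ℕ) (hcr : c ∣ r) (n : ℕ) :
    phi r m c hcr (ga r ^ n) = (DihedralGroup.r (n : ZMod m), 1) := by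
  rw [map_pow, phi_a, Prod.pow_mk, DihedralGroup.r_one_pow, one_pow]

lemma phi_b_pow (r m c : ℕ) (hcr : c ∣ r) (n : ℕ) :
    phi r m c hcr (gb r ^ n) =
      ((DihedralGroup.sr 0 : DihedralGroup m) ^ n, Multiplicative.ofAdd (n : ZMod c)) := by
  rw [map_pow, phi_b, Prod.pow_mk, ofAdd_one_pow]

lemma phi_surj (r m c : ℕ) (hc : Odd c) (hcr : c ∣ r) [NeZero m] [NeZero c] :
    Function.Surjective (phi r m c hcr) := by
  have h1g : ((1 : DihedralGroup m), Multiplicative.ofAdd (1 : ZMod c)) ∈ (phi r m c hcr).range := by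
    refine ⟨gb r ^ (c + 1), ?_⟩
    rw [phi_b_pow, sr_pow_even (by simpa using hc.add_one)]
    have : ((c + 1 : ℕ) : ZMod c) = 1 := by
      push_cast [ZMod.natCast_self]; ring
    rw [this]
  have hsr : ((DihedralGroup.sr 0 : DihedralGroup m), (1 : Multiplicative (ZMod c))) ∈
      (phi r m c hcr).range := by
    have hb : ((DihedralGroup.sr 0 : DihedralGroup m), Multiplicative.ofAdd (1 : ZMod c)) ∈
        (phi r m c hcr).range := ⟨gb r, phi_b r m c hcr⟩
    have := mul_mem hb (inv_mem h1g)
    simpa using this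
  have hz : ∀ y : Multiplicative (ZMod c), ((1 : DihedralGroup m), y) ∈ (phi r m c hcr).range := by
    intro y
    have := pow_mem h1g (y.toAdd).val
    rw [Prod.pow_mk, one_pow, ← ofAdd_nsmul] at this
    simpa [ZMod.natCast_val, ZMod.cast_id] using this
  have hr1 : ∀ i : ZMod m, ((DihedralGroup.r i : DihedralGroup m), (1 : Multiplicative (ZMod c))) ∈
      (phi r m c hcr).range := by
    intro i
    refine ⟨ga r ^ i.val, ?_⟩
    rw [phi_a_pow]
    simp [ZMod.natCast_val, ZMod.cast_id]
  rintro ⟨d, y⟩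
  have hd : (d, (1 : Multiplicative (ZMod c))) ∈ (phi r m c hcr).range := by
    cases d with
    | r i => exact hr1 i
    | sr i =>
        have := mul_mem hsr (hr1 i)
        simpa using this
  have := mul_mem hd (hz y)
  simpa using this

lemma inv_r {m : ℕ} (i : ZMod m) : (DihedralGroup.r i)⁻¹ = DihedralGroup.r (-i) :=
  inv_eq_of_mul_eq_one_right (by rw [DihedralGroup.r_mul_r, add_neg_cancel]; rfl)

lemma r_one_zpow {m : ℕ} (s : ℤ) :
    (DihedralGroup.r 1 : DihedralGroup m) ^ s = DihedralGroup.r (s : ZMod m) := by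
  cases s with
  | ofNat n => rw [Int.ofNat_eq_coe, zpow_natCast, DihedralGroup.r_one_pow]; push_cast; rfl
  | negSucc n =>
      rw [zpow_negSucc, DihedralGroup.r_one_pow, inv_r]
      congr 1
      push_cast [Int.cast_negSucc]
      ring

lemma sr0_zpow_even {m : ℕ} {t : ℤ} (h : Even t) :
    (DihedralGroup.sr 0 : DihedralGroup m) ^ t = 1 := by
  obtain ⟨u, rfl⟩ := h
  rw [← two_mul, zpow_mul]
  have h2 : (DihedralGroup.sr 0 : DihedralGroup m) ^ (2 : ℤ) = 1 := by
    rw [show (2:ℤ) = ((2:ℕ):ℤ) from rfl, zpow_natCast, pow_two, DihedralGroup.sr_mul_self]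
  rw [h2, one_zpow]

lemma sr0_zpow_odd {m : ℕ} {t : ℤ} (h : Odd t) :
    (DihedralGroup.sr 0 : DihedralGroup m) ^ t = DihedralGroup.sr 0 := by
  obtain ⟨u, rfl⟩ := h
  rw [zpow_add, sr0_zpow_even (even_two_mul u), one_mul, zpow_one]

lemma ofAdd_one_zpow {c : ℕ} (t : ℤ) :
    (Multiplicative.ofAdd (1 : ZMod c)) ^ t = Multiplicative.ofAdd ((t : ℤ) : ZMod c) := by
  rw [← ofAdd_zsmul]
  simp

lemma phi_val (r m c : ℕ) (hcr : c ∣ r) (s t : ℤ) :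
    phi r m c hcr (ga r ^ s * gb r ^ t) =
      (DihedralGroup.r (s : ZMod m) * (DihedralGroup.sr 0) ^ t,
        Multiplicative.ofAdd ((t : ℤ) : ZMod c)) := by
  rw [map_mul, map_zpow, map_zpow, phi_a, phi_b, Prod.pow_mk, Prod.pow_mk, Prod.mk_mul_mk,
    r_one_zpow, ofAdd_one_zpow, one_zpow, one_mul]

lemma gen_sq (r : ℕ) (J C : ℤ) (hC : Odd C) :
    (ga r ^ J * gb r ^ C) ^ 2 = gb r ^ (2 * C) := by
  rw [sq]
  calc (ga r ^ J * gb r ^ C) * (ga r ^ J * gb r ^ C)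
      = ga r ^ J * (gb r ^ C * ga r ^ J) * gb r ^ C := by group
    _ = ga r ^ J * (ga r ^ (-J) * gb r ^ C) * gb r ^ C := by rw [odd_shift r J C hC]
    _ = gb r ^ (2 * C) := by group

lemma key (r m c j : ℕ) (hcr : c ∣ r) (hc : Odd c) (hj : j < m) :
    Subgroup.closure {ga r ^ m, ga r ^ j * gb r ^ c} =
      (Subgroup.zpowers ((DihedralGroup.sr (-(j : ZMod m)), 1) :
        DihedralGroup m × Multiplicative (ZMod c))).comap (phi r m c hcr) := by
  set g : DihedralGroup m × Multiplicative (ZMod c) := (DihedralGroup.sr (-(j : ZMod m)), 1) with hg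
  set H := Subgroup.closure {ga r ^ m, ga r ^ j * gb r ^ c} with hH
  have hc' : Odd (c : ℤ) := by exact_mod_cast hc
  have hgsq : g ^ (2 : ℤ) = 1 := by
    have h1 : g * g = 1 := by
      rw [hg, Prod.mk_mul_mk, DihedralGroup.sr_mul_sr, sub_self, mul_one]; rfl
    rw [show (2:ℤ) = 1 + 1 from rfl, zpow_add, zpow_one, h1]
  have hSmem : ∀ x ∈ Subgroup.zpowers g, x = 1 ∨ x = g := by
    intro x hx
    obtain ⟨n, rfl⟩ := Subgroup.mem_zpowers_iff.mp hx
    rcases Int.even_or_odd n with he | ho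
    · left; obtain ⟨u, rfl⟩ := he; rw [← two_mul, zpow_mul, hgsq, one_zpow]
    · right; obtain ⟨u, rfl⟩ := ho; rw [zpow_add, zpow_mul, hgsq, one_zpow, one_mul, zpow_one]
  -- generators of H
  have hg1 : ga r ^ ((m:ℤ)) ∈ H := by
    rw [zpow_natCast]; exact Subgroup.subset_closure (Set.mem_insert _ _)
  have hg2 : ga r ^ ((j:ℤ)) * gb r ^ ((c:ℤ)) ∈ H := by
    rw [zpow_natCast, zpow_natCast]
    exact Subgroup.subset_closure (Set.mem_insert_of_mem _ rfl)
  have hg3 : gb r ^ (2*(c:ℤ)) ∈ H := by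
    rw [← gen_sq r j c hc']; exact pow_mem hg2 2
  refine le_antisymm ((Subgroup.closure_le _).2 ?_) ?_
  · rintro x hx
    rcases hx with rfl | hx
    · refine Subgroup.mem_comap.mpr ?_
      have : phi r m c hcr (ga r ^ m) = 1 := by
        rw [phi_a_pow, ZMod.natCast_self]; rfl
      rw [this]; exact one_mem _
    · rcases hx with rfl
      refine Subgroup.mem_comap.mpr ?_
      have : phi r m c hcr (ga r ^ j * gb r ^ c) = g := by
        rw [map_mul, phi_a_pow, phi_b_pow, Prod.mk_mul_mk, sr_pow_odd hc,
          DihedralGroup.r_mul_sr, zero_sub, one_mul, ZMod.natCast_self, ofAdd_zero, hg]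
      rw [this]; exact Subgroup.mem_zpowers g
  · intro x hx
    obtain ⟨s, t, rfl⟩ := exists_form r x
    rw [Subgroup.mem_comap, phi_val] at hx
    rcases Int.even_or_odd t with hte | hto
    · rw [sr0_zpow_even hte, mul_one] at hx
      rcases hSmem _ hx with h1 | h1
      · have h1a : DihedralGroup.r ((s:ℤ) : ZMod m) = 1 := congrArg Prod.fst h1
        have h1b : Multiplicative.ofAdd ((t:ℤ) : ZMod c) = 1 := congrArg Prod.snd h1
        have hms : (m:ℤ) ∣ s := by
          have hz : ((s:ℤ) : ZMod m) = 0 := by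
            rw [DihedralGroup.one_def] at h1a
            exact DihedralGroup.r.inj h1a
          exact (ZMod.intCast_zmod_eq_zero_iff_dvd s m).1 hz
        have hct : (c:ℤ) ∣ t :=
          (ZMod.intCast_zmod_eq_zero_iff_dvd t c).1 (ofAdd_eq_one.mp h1b)
        have h2t : (2:ℤ) ∣ t := hte.two_dvd
        have hcop : IsCoprime (2:ℤ) (c:ℤ) := by
          obtain ⟨e, he⟩ := hc
          exact ⟨-(e:ℤ), 1, by push_cast [he]; ring⟩
        obtain ⟨t', ht'⟩ := hcop.mul_dvd h2t hct
        obtain ⟨s', hs'⟩ := hms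
        rw [hs', ht']
        refine mul_mem ?_ ?_
        · rw [zpow_mul]; exact zpow_mem hg1 s'
        · rw [zpow_mul]; exact zpow_mem hg3 t'
      · exfalso
        rw [hg] at h1
        have h1a : DihedralGroup.r ((s:ℤ) : ZMod m) = DihedralGroup.sr (-(j : ZMod m)) :=
          congrArg Prod.fst h1
        simp at h1a
    · rw [sr0_zpow_odd hto, DihedralGroup.r_mul_sr, zero_sub] at hx
      rcases hSmem _ hx with h1 | h1
      · exfalso
        have h1a : DihedralGroup.sr (0 - ((s:ℤ) : ZMod m)) = 1 := by
          have := congrArg Prod.fst h1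
          simpa using this
        rw [DihedralGroup.one_def] at h1a
        cases h1a
      · rw [hg] at h1
        have h1a : DihedralGroup.sr (-((s:ℤ) : ZMod m)) = DihedralGroup.sr (-(j : ZMod m)) := by
          have := congrArg Prod.fst h1
          simpa [zero_sub] using this
        have h1b : Multiplicative.ofAdd ((t:ℤ) : ZMod c) = 1 := congrArg Prod.snd h1
        have hmj : (m:ℤ) ∣ (s - (j:ℤ)) := by
          have hz : ((Int.cast (s - (j:ℤ)) : ZMod m)) = 0 := by
            have h2 : ((s:ℤ) : ZMod m) = ((j:ℕ) : ZMod m) :=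
              neg_injective (DihedralGroup.sr.inj h1a)
            have : ((Int.cast (s - (j:ℤ)) : ZMod m)) = ((s:ℤ) : ZMod m) - ((j:ℤ) : ZMod m) := by
              push_cast; ring
            rw [this, h2]
            push_cast
            ring
          exact (ZMod.intCast_zmod_eq_zero_iff_dvd _ m).1 hz
        have hct : (c:ℤ) ∣ t :=
          (ZMod.intCast_zmod_eq_zero_iff_dvd t c).1 (ofAdd_eq_one.mp h1b)
        obtain ⟨t'', ht''⟩ := hct
        have hodd'' : Odd t'' := ((Int.odd_mul).mp (ht'' ▸ hto)).2
        obtain ⟨u, hu⟩ := hodd''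
        obtain ⟨s', hs'⟩ := hmj
        have hrw : ga r ^ s * gb r ^ t =
            (ga r ^ ((m:ℤ))) ^ s' * ((ga r ^ ((j:ℤ)) * gb r ^ ((c:ℤ))) * (gb r ^ (2*(c:ℤ))) ^ u) := by
          have hs : s = (m:ℤ) * s' + j := by linarith [hs']
          have ht : t = (c:ℤ) * (2*u+1) := by rw [ht'', hu]
          rw [hs, ht]
          group
        rw [hrw]
        exact mul_mem (zpow_mem hg1 s') (mul_mem hg2 (zpow_mem hg3 u))

end Stmt5

/-- for `m, k > 0` with `(2k-1) ∣ r` and `0 ≤ j < m`, the subgroup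
`⟨a^m, a^j b^{2k-1}⟩` has index `(2k-1)m` in `G_{2r}`. -/


theorem index_of_F2_subgroup (r m k j : ℕ) (hr : 1 ≤ r) (hm : 1 ≤ m) (hk : 1 ≤ k)
    (hkr : (2 * k - 1) ∣ r) (hj : j < m) :
    (Subgroup.closure {ga r ^ m, ga r ^ j * gb r ^ (2 * k - 1)}).index = (2 * k - 1) * m := by
  set c := 2 * k - 1 with hc
  have hcodd : Odd c := ⟨k - 1, by omega⟩
  haveI : NeZero m := ⟨by omega⟩
  haveI : NeZero c := ⟨by omega⟩
  rw [Stmt5.key r m c j hkr hcodd hj,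
    Subgroup.index_comap_of_surjective _ (Stmt5.phi_surj r m c hcodd hkr)]
  set g : DihedralGroup m × Multiplicative (ZMod c) := (DihedralGroup.sr (-(j : ZMod m)), 1)
    with hg
  have hcard : Nat.card (DihedralGroup m × Multiplicative (ZMod c)) = 2 * m * c := by
    rw [Nat.card_prod, DihedralGroup.nat_card, Nat.card_eq_fintype_card,
      Fintype.card_multiplicative, ZMod.card]
  have horder : orderOf g = 2 := by
    rw [hg, Prod.orderOf_mk, DihedralGroup.orderOf_sr, orderOf_one, Nat.lcm_one_right]
  have hS : Nat.card (Subgroup.zpowers g) = 2 := by rw [Nat.card_zpowers, horder]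
  have hmul := Subgroup.index_mul_card (H := Subgroup.zpowers g)
  rw [hS, hcard] at hmul
  apply Nat.eq_of_mul_eq_mul_right two_pos
  rw [hmul]; ring
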